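/- arXiv:2306.06342 — 2 statements merged into one kernel-verified Lean document; each statement's English description precedes it below -/
import Mathlib

section
/- Marginal coverage of hierarchical full conformal prediction: Suppose Z̃_1,…,Z̃_{K+1} satisfies hierarchical exchangeability, and let Z_test = (X_test, Y_test) = Z_{K+1,1}. Let 𝒜 be a hierarchically symmetric algorithm mapping 𝒵̃^{K+1} to measurable score functions 𝒵 → ℝ, write s^{z̃} = 𝒜(Z̃_1,…,Z̃_K, z̃), let C̃ = { z̃ ∈ 𝒵̃ : s^{z̃}(P₁z̃) ≤ Q_{1−α}( Σ_{k=1}^{K} Σ_{i=1}^{N_k} (1/((K+1)N_k)) δ_{s^{z̃}(Z_{k,i})} + (1/(K+1)) δ_{+∞} ) }, where P₁ projects a finite sequence to its first entry, and define Ĉ(X_test) = {y : (X_test, y) ∈ P₁C̃}. Then P(Y_test ∈ Ĉ(X_test)) ≥ 1 − α. -/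
open MeasureTheory ProbabilityTheory
open scoped ENNReal

noncomputable section

/-- Extend a permutation of `Fin m` to `ℕ` by the identity outside `{0, …, m-1}`. -/
def permExt {m : ℕ} (σ : Equiv.Perm (Fin m)) : ℕ → ℕ :=
  fun i => if h : i < m then (σ ⟨i, h⟩ : ℕ) else i

/-- The representation of the groups `0, …, L-1` of a hierarchical data set:
group `k` is recorded as the pair of its size `N k ω` and its sequence of observations. -/
def hierData {Ω 𝒵 : Type*} (L : ℕ) (N : ℕ → Ω → ℕ) (Z : ℕ → ℕ → Ω → 𝒵) :
    Ω → Fin L → ℕ × (ℕ → 𝒵) :=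
  fun ω k => (N k.1 ω, fun i => Z k.1 i ω)

/-- Hierarchical exchangeability (Definition 1.1) of the groups `0, …, L-1`:
(i) the groups are exchangeable with each other, and (ii) for each `k` and each `m`
with `P(N_k = m) > 0`, conditionally on `N_k = m` the first `m` observations within
group `k` are exchangeable. -/
def HierExch {Ω 𝒵 : Type*} [MeasurableSpace Ω] [MeasurableSpace 𝒵] (L : ℕ)
    (P : Measure Ω) (N : ℕ → Ω → ℕ) (Z : ℕ → ℕ → Ω → 𝒵) : Prop :=
  (∀ σ : Equiv.Perm (Fin L),
      Measure.map (fun ω => fun k : Fin L => hierData L N Z ω (σ k)) P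
        = Measure.map (hierData L N Z) P) ∧
  (∀ k, k < L → ∀ m : ℕ, 0 < P {ω | N k ω = m} → ∀ σ : Equiv.Perm (Fin m),
      Measure.map
          (hierData L N fun k' i => if k' = k then Z k' (permExt σ i) else Z k' i)
          (ProbabilityTheory.cond P {ω | N k ω = m})
        = Measure.map (hierData L N Z) (ProbabilityTheory.cond P {ω | N k ω = m}))

/-- The `(1-β)`-quantile `Q_{1-β}(μ) = inf {t : μ((-∞, t]) ≥ 1-β}` of a distribution `μ`
on the extended real line. -/
def erealQuantile (β : ℝ) (μ : Measure EReal) : EReal :=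
  sInf {t : EReal | ENNReal.ofReal β ≤ μ (Set.Iic t)}

/-- The HCP threshold: the `(1-α)`-quantile of the weighted empirical distribution
`Σ_{k=K₀}^{K-1} Σ_{i<n k} (1/((K₁+1)·(n k))) δ_{sc k i} + (1/(K₁+1)) δ_{+∞}`,
where `K₁ = K - K₀`. -/
def hcpThreshold (α : ℝ) (K₀ K : ℕ) (n : ℕ → ℕ) (sc : ℕ → ℕ → ℝ) : EReal :=
  erealQuantile (1 - α)
    ((∑ k ∈ Finset.Ico K₀ K, ∑ i ∈ Finset.range (n k),
        (((K - K₀ + 1 : ℕ) : ℝ≥0∞) * (n k : ℝ≥0∞))⁻¹ • Measure.dirac ((sc k i : EReal)))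
      + (((K - K₀ + 1 : ℕ) : ℝ≥0∞))⁻¹ • Measure.dirac (⊤ : EReal))

/-- An algorithm (or function) of `L` groups is hierarchically symmetric if its output is
unchanged by any permutation of its `L` group arguments and by any permutation of the
entries within any single group argument. -/
def HierInvariant {𝒵 β : Type*} (L : ℕ) (q : (Fin L → ℕ × (ℕ → 𝒵)) → β) : Prop :=
  (∀ (d : Fin L → ℕ × (ℕ → 𝒵)) (σ : Equiv.Perm (Fin L)), q (fun k => d (σ k)) = q d) ∧
  (∀ (d : Fin L → ℕ × (ℕ → 𝒵)) (k : Fin L) (σ : Equiv.Perm (Fin (d k).1)),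
      q (Function.update d k ((d k).1, fun i => (d k).2 (permExt σ i))) = q d)

lemma quantile_le_measure (β : ℝ) (μ : Measure EReal) [IsFiniteMeasure μ]
    (h : ENNReal.ofReal β ≤ μ Set.univ) :
    ENNReal.ofReal β ≤ μ (Set.Iic (erealQuantile β μ)) := by
  set S := {t : EReal | ENNReal.ofReal β ≤ μ (Set.Iic t)} with hS
  have hne : S.Nonempty := ⟨⊤, by simpa [hS] using h⟩
  obtain ⟨u, hu_anti, hu_tendsto, hu_mem⟩ := exists_seq_tendsto_sInf hne (OrderBot.bddBelow S)
  have hinf : sInf S = ⨅ n, u n :=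
    tendsto_nhds_unique hu_tendsto (tendsto_atTop_iInf hu_anti)
  have h1 : Set.Iic (sInf S) = ⋂ n, Set.Iic (u n) := by
    rw [hinf]; ext x; simp [le_iInf_iff]
  have h2 : μ (⋂ n, Set.Iic (u n)) = ⨅ n, μ (Set.Iic (u n)) := by
    refine Directed.measure_iInter
      (fun n => measurableSet_Iic.nullMeasurableSet) ?_ ⟨0, measure_ne_top μ _⟩
    intro m n
    exact ⟨max m n, Set.Iic_subset_Iic.2 (hu_anti (le_max_left m n)),
      Set.Iic_subset_Iic.2 (hu_anti (le_max_right m n))⟩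
  rw [erealQuantile, ← hS, h1, h2]
  exact le_iInf fun n => hu_mem n

lemma erealQuantile_anti {β : ℝ} {μ ν : Measure EReal}
    (h : ∀ t, ν (Set.Iic t) ≤ μ (Set.Iic t)) :
    erealQuantile β μ ≤ erealQuantile β ν :=
  sInf_le_sInf fun t ht => le_trans ht (h t)

lemma sum_permExt {M : Type*} [AddCommMonoid M] {n : ℕ} (σ : Equiv.Perm (Fin n)) (f : ℕ → M) :
    ∑ i ∈ Finset.range n, f (permExt σ i) = ∑ i ∈ Finset.range n, f i := by
  rw [← Fin.sum_univ_eq_sum_range (fun i => f (permExt σ i)) n, ← Fin.sum_univ_eq_sum_range f n,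
    ← Equiv.sum_comp σ (fun i : Fin n => f i.1)]
  refine Finset.sum_congr rfl fun i _ => ?_
  simp [permExt, i.2]

section Core

variable {𝒵 : Type*} [MeasurableSpace 𝒵] {K : ℕ}
set_option linter.unusedSectionVars false
set_option maxHeartbeats 1000000

/-- weight of each point of group `k`. -/
def wgt (K : ℕ) (n : ℕ) : ℝ≥0∞ := (((K+1 : ℕ) : ℝ≥0∞) * (n : ℝ≥0∞))⁻¹

variable (𝒜 : (Fin (K+1) → ℕ × (ℕ → 𝒵)) → 𝒵 → ℝ)

def esc (d : Fin (K+1) → ℕ × (ℕ → 𝒵)) (k : Fin (K+1)) (i : ℕ) : EReal :=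
  ((𝒜 d ((d k).2 i) : ℝ) : EReal)

def muFull (d : Fin (K+1) → ℕ × (ℕ → 𝒵)) : Measure EReal :=
  ∑ k : Fin (K+1), ∑ i ∈ Finset.range (d k).1, wgt K (d k).1 • Measure.dirac (esc 𝒜 d k i)

lemma muFull_apply (d : Fin (K+1) → ℕ × (ℕ → 𝒵)) {T : Set EReal} (hT : MeasurableSet T) :
    muFull 𝒜 d T = ∑ k : Fin (K+1), ∑ i ∈ Finset.range (d k).1,
      wgt K (d k).1 * T.indicator 1 (esc 𝒜 d k i) := by
  rw [muFull, MeasureTheory.Measure.finset_sum_apply]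
  refine Finset.sum_congr rfl fun k _ => ?_
  rw [MeasureTheory.Measure.finset_sum_apply]
  refine Finset.sum_congr rfl fun i _ => ?_
  rw [Measure.smul_apply, Measure.dirac_apply' _ hT, smul_eq_mul]

set_option linter.unusedSectionVars false
set_option maxHeartbeats 1000000

lemma wgt_mul {n : ℕ} (hn : 1 ≤ n) :
    (n : ℝ≥0∞) * wgt K n = (((K+1 : ℕ)) : ℝ≥0∞)⁻¹ := by
  have hn0 : (n : ℝ≥0∞) ≠ 0 := by
    exact_mod_cast Nat.cast_ne_zero.2 (by omega : n ≠ 0)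
  rw [wgt, ENNReal.mul_inv (Or.inl (by simp)) (Or.inl (by simp)),
    mul_comm ((((K+1:ℕ)):ℝ≥0∞))⁻¹, ← mul_assoc, ENNReal.mul_inv_cancel hn0 (by simp), one_mul]

lemma muFull_univ (d : Fin (K+1) → ℕ × (ℕ → 𝒵)) (hd : ∀ k, 1 ≤ (d k).1) :
    muFull 𝒜 d Set.univ = 1 := by
  rw [muFull_apply 𝒜 d MeasurableSet.univ]
  have h1 : ∀ k : Fin (K+1), ∑ i ∈ Finset.range (d k).1,
      wgt K (d k).1 * Set.univ.indicator (1 : EReal → ℝ≥0∞) (esc 𝒜 d k i)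
      = (((K+1 : ℕ)) : ℝ≥0∞)⁻¹ := by
    intro k
    simp only [Set.indicator_univ, Pi.one_apply, mul_one, Finset.sum_const,
      Finset.card_range, nsmul_eq_mul]
    exact wgt_mul (hd k)
  refine Eq.trans (Finset.sum_congr rfl fun k _ => h1 k) ?_
  rw [Finset.sum_const, Finset.card_univ, Fintype.card_fin, nsmul_eq_mul,
    ENNReal.mul_inv_cancel (Nat.cast_ne_zero.2 K.succ_ne_zero) (ENNReal.natCast_ne_top _)]

lemma muFull_univ_le (d : Fin (K+1) → ℕ × (ℕ → 𝒵)) : muFull 𝒜 d Set.univ ≤ 1 := by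
  rw [muFull_apply 𝒜 d MeasurableSet.univ]
  have hle : ∀ k : Fin (K+1), (∑ i ∈ Finset.range (d k).1,
      wgt K (d k).1 * Set.univ.indicator (1 : EReal → ℝ≥0∞) (esc 𝒜 d k i))
      ≤ (((K+1:ℕ)):ℝ≥0∞)⁻¹ := by
    intro k
    simp only [Set.indicator_univ, Pi.one_apply, mul_one, Finset.sum_const,
      Finset.card_range, nsmul_eq_mul]
    rcases Nat.eq_zero_or_pos (d k).1 with h | h
    · simp [h]
    · exact le_of_eq (wgt_mul h)
  refine le_trans (Finset.sum_le_sum fun k _ => hle k) ?_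
  rw [Finset.sum_const, Finset.card_univ, Fintype.card_fin, nsmul_eq_mul,
    ENNReal.mul_inv_cancel (Nat.cast_ne_zero.2 K.succ_ne_zero) (ENNReal.natCast_ne_top _)]

instance muFull_finite (d : Fin (K+1) → ℕ × (ℕ → 𝒵)) : IsFiniteMeasure (muFull 𝒜 d) :=
  ⟨lt_of_le_of_lt (muFull_univ_le 𝒜 d) ENNReal.one_lt_top⟩

lemma muFull_comp_perm (hsym : HierInvariant (K+1) 𝒜)
    (d : Fin (K+1) → ℕ × (ℕ → 𝒵)) (σ : Equiv.Perm (Fin (K+1))) :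
    muFull 𝒜 (fun k => d (σ k)) = muFull 𝒜 d := by
  rw [muFull, muFull,
    ← Equiv.sum_comp σ (fun k => ∑ i ∈ Finset.range (d k).1,
      wgt K (d k).1 • Measure.dirac (esc 𝒜 d k i))]
  refine Finset.sum_congr rfl fun k _ => Finset.sum_congr rfl fun i _ => ?_
  rw [esc, esc, hsym.1 d σ]

/-- Apply a permutation `σ` of `Fin m` to the entries of group `k`. -/
def grpPerm (d : Fin (K+1) → ℕ × (ℕ → 𝒵)) (k : Fin (K+1)) {m : ℕ} (σ : Equiv.Perm (Fin m)) :
    Fin (K+1) → ℕ × (ℕ → 𝒵) :=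
  Function.update d k ((d k).1, fun i => (d k).2 (permExt σ i))

lemma grpPerm_self (d : Fin (K+1) → ℕ × (ℕ → 𝒵)) (k : Fin (K+1)) {m : ℕ}
    (σ : Equiv.Perm (Fin m)) :
    grpPerm d k σ k = ((d k).1, fun i => (d k).2 (permExt σ i)) :=
  Function.update_self _ _ _

lemma grpPerm_ne (d : Fin (K+1) → ℕ × (ℕ → 𝒵)) (k : Fin (K+1)) {m : ℕ}
    (σ : Equiv.Perm (Fin m)) {k' : Fin (K+1)} (h : k' ≠ k) :
    grpPerm d k σ k' = d k' :=
  Function.update_of_ne h _ _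

lemma A_grpPerm (hsym : HierInvariant (K+1) 𝒜) (d : Fin (K+1) → ℕ × (ℕ → 𝒵))
    (k : Fin (K+1)) {m : ℕ} (σ : Equiv.Perm (Fin m)) (h : (d k).1 = m) :
    𝒜 (grpPerm d k σ) = 𝒜 d := by
  subst h; exact hsym.2 d k σ

lemma muFull_grpPerm (hsym : HierInvariant (K+1) 𝒜) (d : Fin (K+1) → ℕ × (ℕ → 𝒵))
    (k : Fin (K+1)) {m : ℕ} (σ : Equiv.Perm (Fin m)) (h : (d k).1 = m) :
    muFull 𝒜 (grpPerm d k σ) = muFull 𝒜 d := by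
  subst h
  have hA : 𝒜 (grpPerm d k σ) = 𝒜 d := A_grpPerm 𝒜 hsym d k σ rfl
  rw [muFull, muFull]
  refine Finset.sum_congr rfl fun k' _ => ?_
  rcases eq_or_ne k' k with rfl | hne
  · simp only [esc, hA, grpPerm_self]
    exact sum_permExt σ
      (fun i => wgt K (d k').1 • Measure.dirac ((𝒜 d ((d k').2 i) : ℝ) : EReal))
  · have h1 : grpPerm d k σ k' = d k' := grpPerm_ne d k σ hne
    refine Finset.sum_congr (by rw [h1]) fun i _ => ?_
    rw [esc, esc, hA, h1]

/-- The quantile of the full empirical score distribution. -/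
def Qf (β : ℝ) (d : Fin (K+1) → ℕ × (ℕ → 𝒵)) : EReal := erealQuantile β (muFull 𝒜 d)

/-- Indicator that the score of observation `i` of group `k` is below the quantile. -/
def Ff (β : ℝ) (d : Fin (K+1) → ℕ × (ℕ → 𝒵)) (k : Fin (K+1)) (i : ℕ) : ℝ≥0∞ :=
  if esc 𝒜 d k i ≤ Qf 𝒜 β d then 1 else 0

/-- Within-group average of `Ff` over group `k`. -/
def Gf (β : ℝ) (d : Fin (K+1) → ℕ × (ℕ → 𝒵)) (k : Fin (K+1)) : ℝ≥0∞ :=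
  (((d k).1 : ℝ≥0∞))⁻¹ * ∑ i ∈ Finset.range (d k).1, Ff 𝒜 β d k i

lemma measurable_sum_range {α : Type*} [MeasurableSpace α] {n : α → ℕ} (hn : Measurable n)
    {f : ℕ → α → ℝ≥0∞} (hf : ∀ i, Measurable (f i)) :
    Measurable fun a => ∑ i ∈ Finset.range (n a), f i a := by
  have he : (fun a => ∑ i ∈ Finset.range (n a), f i a)
      = fun a => ∑' i, if i < n a then f i a else 0 := by
    funext a
    rw [tsum_eq_sum (s := Finset.range (n a)) (fun i hi => by
      rw [if_neg]; simpa using fun h => hi (Finset.mem_range.2 h))]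
    exact (Finset.sum_congr rfl fun i hi => (if_pos (Finset.mem_range.1 hi))).symm
  rw [he]
  exact Measurable.ennreal_tsum fun i =>
    Measurable.ite (hn (by trivial)) (hf i) measurable_const

section Meas

variable {h𝒜 : Measurable fun p : (Fin (K+1) → ℕ × (ℕ → 𝒵)) × 𝒵 => 𝒜 p.1 p.2}

include h𝒜

lemma meas_score (k : Fin (K+1)) (i : ℕ) :
    Measurable fun d : Fin (K+1) → ℕ × (ℕ → 𝒵) => 𝒜 d ((d k).2 i) :=
  h𝒜.comp (measurable_id.prodMk
    ((measurable_pi_apply i).comp ((measurable_pi_apply k).snd)))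

lemma meas_esc (k : Fin (K+1)) (i : ℕ) :
    Measurable fun d : Fin (K+1) → ℕ × (ℕ → 𝒵) => esc 𝒜 d k i :=
  measurable_coe_real_ereal.comp (meas_score 𝒜 (h𝒜 := h𝒜) k i)

lemma meas_muIic (t : EReal) :
    Measurable fun d : Fin (K+1) → ℕ × (ℕ → 𝒵) => muFull 𝒜 d (Set.Iic t) := by
  have he : (fun d : Fin (K+1) → ℕ × (ℕ → 𝒵) => muFull 𝒜 d (Set.Iic t))
      = fun d => ∑ k : Fin (K+1), ∑ i ∈ Finset.range (d k).1,
          wgt K (d k).1 * (Set.Iic t).indicator 1 (esc 𝒜 d k i) :=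
    funext fun d => muFull_apply 𝒜 d measurableSet_Iic
  rw [he]
  refine Finset.measurable_sum _ fun k _ => ?_
  refine measurable_sum_range
    (f := fun (i : ℕ) (d : Fin (K+1) → ℕ × (ℕ → 𝒵)) => wgt K (d k).1 * (Set.Iic t).indicator 1 (esc 𝒜 d k i))
    ((measurable_pi_apply k).fst) fun i => Measurable.mul ?_ ?_
  · exact Measurable.comp' (g := wgt K) (f := fun d : Fin (K+1) → ℕ × (ℕ → 𝒵) => (d k).1)
      measurable_from_nat ((measurable_pi_apply k).fst)
  · exact (measurable_one.indicator measurableSet_Iic).comp (meas_esc 𝒜 (h𝒜 := h𝒜) k i)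

lemma meas_Qf (β : ℝ) :
    Measurable fun d : Fin (K+1) → ℕ × (ℕ → 𝒵) => Qf 𝒜 β d := by
  apply measurable_of_Iio
  intro t
  have hchar : (fun d : Fin (K+1) → ℕ × (ℕ → 𝒵) => Qf 𝒜 β d) ⁻¹' (Set.Iio t) =
      (⋃ q : ℚ, {d | ((q : ℝ) : EReal) < t ∧
          ENNReal.ofReal β ≤ muFull 𝒜 d (Set.Iic ((q : ℝ) : EReal))}) ∪
      {d | (⊥ : EReal) < t ∧ ENNReal.ofReal β ≤ muFull 𝒜 d (Set.Iic (⊥ : EReal))} := by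
    ext d
    simp only [Set.mem_preimage, Set.mem_Iio, Set.mem_union, Set.mem_iUnion, Set.mem_setOf_eq]
    constructor
    · intro h
      rw [Qf, erealQuantile] at h
      obtain ⟨s, hs, hst⟩ := sInf_lt_iff.1 h
      induction s using EReal.rec with
      | bot => exact Or.inr ⟨hst, hs⟩
      | top => exact absurd hst (by simp)
      | coe x =>
          refine Or.inl ?_
          obtain ⟨q, hq1, hq2⟩ : ∃ q : ℚ, ((x : EReal) ≤ ((q:ℝ) : EReal)) ∧ ((q:ℝ) : EReal) < t := by
            induction t using EReal.rec with
            | bot => exact absurd hst (by simp)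
            | top =>
                obtain ⟨q, hq⟩ := exists_rat_gt x
                exact ⟨q, by exact_mod_cast hq.le, by simp⟩
            | coe y =>
                obtain ⟨q, h1, h2⟩ := exists_rat_btwn (EReal.coe_lt_coe_iff.1 hst)
                exact ⟨q, by exact_mod_cast h1.le, by exact_mod_cast h2⟩
          exact ⟨q, hq2, le_trans hs (measure_mono (Set.Iic_subset_Iic.2 hq1))⟩
    · rintro (⟨q, hq, hb⟩ | ⟨hbot, hb⟩)
      · exact lt_of_le_of_lt (sInf_le hb) hq
      · exact lt_of_le_of_lt (sInf_le hb) hbot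
  rw [hchar]
  refine MeasurableSet.union (MeasurableSet.iUnion fun q => ?_) ?_
  · exact (MeasurableSet.const _).inter ((meas_muIic 𝒜 (h𝒜 := h𝒜) _) measurableSet_Ici)
  · exact (MeasurableSet.const _).inter ((meas_muIic 𝒜 (h𝒜 := h𝒜) _) measurableSet_Ici)

lemma measSet_FQ (β : ℝ) (k : Fin (K+1)) (i : ℕ) :
    MeasurableSet {d : Fin (K+1) → ℕ × (ℕ → 𝒵) | esc 𝒜 d k i ≤ Qf 𝒜 β d} :=
  measurableSet_le (meas_esc 𝒜 (h𝒜 := h𝒜) k i) (meas_Qf 𝒜 (h𝒜 := h𝒜) β)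

lemma meas_Ff (β : ℝ) (k : Fin (K+1)) (i : ℕ) :
    Measurable fun d : Fin (K+1) → ℕ × (ℕ → 𝒵) => Ff 𝒜 β d k i :=
  Measurable.ite (measSet_FQ 𝒜 (h𝒜 := h𝒜) β k i) measurable_const measurable_const

lemma meas_Gf (β : ℝ) (k : Fin (K+1)) :
    Measurable fun d : Fin (K+1) → ℕ × (ℕ → 𝒵) => Gf 𝒜 β d k :=
  Measurable.mul (Measurable.comp' (g := fun n : ℕ => ((n : ℝ≥0∞))⁻¹) (f := fun d : Fin (K+1) → ℕ × (ℕ → 𝒵) => (d k).1)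
      measurable_from_nat ((measurable_pi_apply k).fst))
    (measurable_sum_range (f := fun (i : ℕ) (d : Fin (K+1) → ℕ × (ℕ → 𝒵)) => Ff 𝒜 β d k i)
      ((measurable_pi_apply k).fst) fun i => meas_Ff 𝒜 (h𝒜 := h𝒜) β k i)

end Meas

lemma avg_eq (β : ℝ) (d : Fin (K+1) → ℕ × (ℕ → 𝒵)) :
    (((K+1 : ℕ)) : ℝ≥0∞)⁻¹ * ∑ k : Fin (K+1), Gf 𝒜 β d k
      = muFull 𝒜 d (Set.Iic (Qf 𝒜 β d)) := by
  rw [muFull_apply 𝒜 d measurableSet_Iic, Finset.mul_sum]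
  refine Finset.sum_congr rfl fun k _ => ?_
  rw [Gf, ← mul_assoc, ← ENNReal.mul_inv (Or.inl (by simp)) (Or.inl (by simp)), ← wgt,
    Finset.mul_sum]
  refine Finset.sum_congr rfl fun i _ => ?_
  congr 1
  rw [Ff, Set.indicator_apply]
  by_cases h : esc 𝒜 d k i ≤ Qf 𝒜 β d <;> simp [h, Set.mem_Iic]

section Main

variable {Ω : Type*} [MeasurableSpace Ω]

lemma meas_hierData {K : ℕ} (N : ℕ → Ω → ℕ) (Z : ℕ → ℕ → Ω → 𝒵)
    (hNmeas : ∀ k, Measurable (N k)) (hZmeas : ∀ k i, Measurable (Z k i)) :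
    Measurable (hierData (K+1) N Z) :=
  measurable_pi_lambda _ fun k =>
    (hNmeas k.1).prodMk (measurable_pi_lambda _ fun i => hZmeas k.1 i)

lemma meas_grpPerm (k : Fin (K+1)) {m : ℕ} (σ : Equiv.Perm (Fin m)) :
    Measurable fun d : Fin (K+1) → ℕ × (ℕ → 𝒵) => grpPerm d k σ := by
  refine measurable_pi_lambda _ fun k' => ?_
  have he : (fun d : Fin (K+1) → ℕ × (ℕ → 𝒵) => grpPerm d k σ k')
      = fun d => if k' = k then ((d k).1, fun i => (d k).2 (permExt σ i)) else d k' := by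
    funext d; rw [grpPerm, Function.update_apply]
  rw [he]
  by_cases h : k' = k
  · simp only [h, if_pos]
    exact ((measurable_pi_apply k).fst).prodMk
      (measurable_pi_lambda _ fun i =>
        (measurable_pi_apply (permExt σ i)).comp ((measurable_pi_apply k).snd))
  · simp only [h, if_neg, if_false]
    exact measurable_pi_apply k'

variable {h𝒜 : Measurable fun p : (Fin (K+1) → ℕ × (ℕ → 𝒵)) × 𝒵 => 𝒜 p.1 p.2}

include h𝒜

lemma main_coverage
    (P : Measure Ω) [IsProbabilityMeasure P]
    (N : ℕ → Ω → ℕ) (Z : ℕ → ℕ → Ω → 𝒵)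
    (hN : ∀ k ω, 1 ≤ N k ω)
    (hNmeas : ∀ k, Measurable (N k)) (hZmeas : ∀ k i, Measurable (Z k i))
    (hexch : HierExch (K + 1) P N Z)
    {β : ℝ} (hβ : β ≤ 1)
    (hsym : HierInvariant (K + 1) 𝒜) :
    ENNReal.ofReal β ≤
      (Measure.map (hierData (K+1) N Z) P)
        {d | esc 𝒜 d (Fin.last K) 0 ≤ Qf 𝒜 β d} := by
  have hDmeas : Measurable (hierData (K+1) N Z) := meas_hierData N Z hNmeas hZmeas
  set ρ := Measure.map (hierData (K+1) N Z) P with hρ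
  have hρprob : IsProbabilityMeasure ρ := Measure.isProbabilityMeasure_map hDmeas.aemeasurable
  -- the event as a lintegral
  have h1 : ∫⁻ d, Ff 𝒜 β d (Fin.last K) 0 ∂ρ
      = ρ {d | esc 𝒜 d (Fin.last K) 0 ≤ Qf 𝒜 β d} := by
    have he : (fun d => Ff 𝒜 β d (Fin.last K) 0)
        = Set.indicator {d | esc 𝒜 d (Fin.last K) 0 ≤ Qf 𝒜 β d} (1 : (Fin (K+1) → ℕ × (ℕ → 𝒵)) → ℝ≥0∞) := by
      funext d; rw [Ff, Set.indicator_apply]; simp only [Set.mem_setOf_eq, Pi.one_apply]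
    rw [he]
    exact lintegral_indicator_one (measSet_FQ 𝒜 (h𝒜 := h𝒜) β (Fin.last K) 0)
  -- a.e. all group sizes are ≥ 1
  have h_ae : ∀ᵐ d ∂ρ, ∀ k : Fin (K+1), 1 ≤ (d k).1 := by
    rw [ae_iff, hρ, Measure.map_apply hDmeas]
    · have : (hierData (K+1) N Z) ⁻¹' {d | ¬ ∀ k : Fin (K+1), 1 ≤ (d k).1} = ∅ := by
        ext ω; simp only [Set.mem_preimage, Set.mem_setOf_eq, Set.mem_empty_iff_false,
          iff_false, not_not]
        intro k; exact hN k.1 ω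
      rw [this, measure_empty]
    · have : {d : Fin (K+1) → ℕ × (ℕ → 𝒵) | ¬ ∀ k : Fin (K+1), 1 ≤ (d k).1}
          = (⋂ k : Fin (K+1), (fun d : Fin (K+1) → ℕ × (ℕ → 𝒵) => (d k).1) ⁻¹' {n | 1 ≤ n})ᶜ := by
        ext d; simp
      rw [this]
      exact (MeasurableSet.iInter fun k => (measurable_pi_apply k).fst (by trivial)).compl
  have hmapσ : ∀ σ : Equiv.Perm (Fin (K+1)),
      Measure.map (fun (d : Fin (K+1) → ℕ × (ℕ → 𝒵)) (k : Fin (K+1)) => d (σ k)) ρ = ρ := by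
    intro σ
    have hpm : Measurable fun (d : Fin (K+1) → ℕ × (ℕ → 𝒵)) (k : Fin (K+1)) => d (σ k) :=
      measurable_pi_lambda _ fun k => measurable_pi_apply (σ k)
    rw [hρ, Measure.map_map hpm hDmeas]
    exact hexch.1 σ
  have stepB : ∀ k : Fin (K+1),
      ∫⁻ d, Gf 𝒜 β d k ∂ρ = ∫⁻ d, Gf 𝒜 β d (Fin.last K) ∂ρ := by
    intro k
    set σ := Equiv.swap k (Fin.last K) with hσdef
    have hpm : Measurable fun (d : Fin (K+1) → ℕ × (ℕ → 𝒵)) (k' : Fin (K+1)) => d (σ k') :=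
      measurable_pi_lambda _ fun k' => measurable_pi_apply (σ k')
    have h2 : ∀ d : Fin (K+1) → ℕ × (ℕ → 𝒵),
        Gf 𝒜 β (fun k' => d (σ k')) (Fin.last K) = Gf 𝒜 β d k := by
      intro d
      have hA : 𝒜 (fun k' => d (σ k')) = 𝒜 d := hsym.1 d σ
      have hQ : Qf 𝒜 β (fun k' => d (σ k')) = Qf 𝒜 β d := by
        rw [Qf, Qf, muFull_comp_perm 𝒜 hsym d σ]
      have hσl : σ (Fin.last K) = k := Equiv.swap_apply_right _ _
      simp only [Gf, Ff, esc, hA, hQ, hσl]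
      rfl
    calc ∫⁻ d, Gf 𝒜 β d k ∂ρ
        = ∫⁻ d, Gf 𝒜 β (fun k' => d (σ k')) (Fin.last K) ∂ρ :=
          lintegral_congr fun d => (h2 d).symm
      _ = ∫⁻ d, Gf 𝒜 β d (Fin.last K)
            ∂(Measure.map (fun (d : Fin (K+1) → ℕ × (ℕ → 𝒵)) (k' : Fin (K+1)) => d (σ k')) ρ) :=
          (lintegral_map (meas_Gf 𝒜 (h𝒜 := h𝒜) β (Fin.last K)) hpm).symm
      _ = ∫⁻ d, Gf 𝒜 β d (Fin.last K) ∂ρ := by rw [hmapσ σ]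
  have stepA : ∫⁻ d, Ff 𝒜 β d (Fin.last K) 0 ∂ρ = ∫⁻ d, Gf 𝒜 β d (Fin.last K) ∂ρ := by
    set KL := Fin.last K with hKL
    have hAmeas : ∀ m : ℕ, MeasurableSet {d : Fin (K+1) → ℕ × (ℕ → 𝒵) | (d KL).1 = m} :=
      fun m => (measurable_pi_apply KL).fst (measurableSet_singleton m)
    have hAunion : (⋃ m : ℕ, {d : Fin (K+1) → ℕ × (ℕ → 𝒵) | (d KL).1 = m}) = Set.univ := by
      ext d; simp
    have hAdisj : Pairwise (Function.onFun Disjoint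
        fun m : ℕ => {d : Fin (K+1) → ℕ × (ℕ → 𝒵) | (d KL).1 = m}) := by
      intro m m' hmm'
      refine Set.disjoint_left.2 fun d hd hd' => hmm' ?_
      rw [Set.mem_setOf_eq] at hd hd'
      rw [← hd, ← hd']
    have hdecomp : ∀ (h : (Fin (K+1) → ℕ × (ℕ → 𝒵)) → ℝ≥0∞),
        ∫⁻ d, h d ∂ρ = ∑' m : ℕ, ∫⁻ d in {d | (d KL).1 = m}, h d ∂ρ := by
      intro h
      rw [← setLIntegral_univ, ← hAunion, lintegral_iUnion hAmeas hAdisj]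
    rw [hdecomp (fun d => Ff 𝒜 β d KL 0), hdecomp (fun d => Gf 𝒜 β d KL)]
    refine tsum_congr fun m => ?_
    by_cases hm : P {ω | N K ω = m} = 0
    · have hρA : ρ {d : Fin (K+1) → ℕ × (ℕ → 𝒵) | (d KL).1 = m} = 0 := by
        rw [hρ, Measure.map_apply hDmeas (hAmeas m)]
        exact hm
      rw [setLIntegral_measure_zero _ _ hρA, setLIntegral_measure_zero _ _ hρA]
    · have hs : MeasurableSet {ω | N K ω = m} := hNmeas K (measurableSet_singleton m)
      have hm1 : 1 ≤ m := by
        by_contra hcon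
        apply hm
        have hempty : {ω | N K ω = m} = ∅ := by
          ext ω
          simp only [Set.mem_setOf_eq, Set.mem_empty_iff_false, iff_false]
          have := hN K ω; omega
        rw [hempty, measure_empty]
      have hPpos : 0 < P {ω | N K ω = m} := pos_iff_ne_zero.2 hm
      haveI hcond : IsProbabilityMeasure (ProbabilityTheory.cond P {ω | N K ω = m}) :=
        cond_isProbabilityMeasure hm
      set ν := Measure.map (hierData (K+1) N Z) (ProbabilityTheory.cond P {ω | N K ω = m})
        with hν
      have hrel : ∀ (h : (Fin (K+1) → ℕ × (ℕ → 𝒵)) → ℝ≥0∞), Measurable h →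
          ∫⁻ d in {d : Fin (K+1) → ℕ × (ℕ → 𝒵) | (d KL).1 = m}, h d ∂ρ
            = P {ω | N K ω = m} * ∫⁻ d, h d ∂ν := by
        intro h hh
        rw [hν, ProbabilityTheory.cond, Measure.map_smul, lintegral_smul_measure,
          lintegral_map hh hDmeas, hρ, setLIntegral_map (hAmeas m) hh hDmeas, smul_eq_mul, ← mul_assoc,
          ENNReal.mul_inv_cancel hm (measure_ne_top P _), one_mul]
        rfl
      have haem : ∀ᵐ d ∂ν, (d KL).1 = m := by
        rw [ae_iff, hν, Measure.map_apply hDmeas]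
        · have hpre : hierData (K+1) N Z ⁻¹' {d | ¬ (d KL).1 = m} = {ω | N K ω = m}ᶜ := rfl
          rw [hpre, ProbabilityTheory.cond_apply hs]
          rw [Set.inter_compl_self, measure_empty, mul_zero]
        · exact (hAmeas m).compl
      have hswap : ∀ i, i < m → ∫⁻ d, Ff 𝒜 β d KL i ∂ν = ∫⁻ d, Ff 𝒜 β d KL 0 ∂ν := by
        intro i hi
        have hm0 : 0 < m := by omega
        set σ : Equiv.Perm (Fin m) := Equiv.swap ⟨0, hm0⟩ ⟨i, hi⟩ with hσdef
        have hfact : hierData (K+1) N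
              (fun k' i' => if k' = K then Z k' (permExt σ i') else Z k' i')
            = (fun d : Fin (K+1) → ℕ × (ℕ → 𝒵) => grpPerm d KL σ)
                ∘ (hierData (K+1) N Z) := by
          funext ω
          funext k
          rcases eq_or_ne k KL with rfl | hne
          · have h1 : ((KL : Fin (K+1)) : ℕ) = K := rfl
            simp [Function.comp_apply, grpPerm_self, hierData, h1]
          · have hne' : ¬ k.1 = K := fun h => hne (Fin.ext h)
            simp only [Function.comp_apply, grpPerm_ne _ _ _ hne, hierData, hne', if_false]
        have hmapgrp :
            Measure.map (fun d : Fin (K+1) → ℕ × (ℕ → 𝒵) => grpPerm d KL σ) ν = ν := by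
          rw [hν, Measure.map_map (meas_grpPerm KL σ) hDmeas, ← hfact]
          exact hexch.2 K (by omega) m hPpos σ
        have hperm0 : permExt σ 0 = i := by
          simp only [permExt, hm0, dif_pos, hσdef]
          rw [show (⟨0, hm0⟩ : Fin m) = ⟨0, hm0⟩ from rfl, Equiv.swap_apply_left]
        have hpoint : ∀ d : Fin (K+1) → ℕ × (ℕ → 𝒵), (d KL).1 = m →
            Ff 𝒜 β (grpPerm d KL σ) KL 0 = Ff 𝒜 β d KL i := by
          intro d hd
          have hA : 𝒜 (grpPerm d KL σ) = 𝒜 d := A_grpPerm 𝒜 hsym d KL σ hd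
          have hQ : Qf 𝒜 β (grpPerm d KL σ) = Qf 𝒜 β d := by
            rw [Qf, Qf, muFull_grpPerm 𝒜 hsym d KL σ hd]
          have hesc : esc 𝒜 (grpPerm d KL σ) KL 0 = esc 𝒜 d KL i := by
            rw [esc, esc, hA, grpPerm_self]
            simp only [hperm0]
          rw [Ff, Ff, hQ, hesc]
        calc ∫⁻ d, Ff 𝒜 β d KL i ∂ν
            = ∫⁻ d, Ff 𝒜 β (grpPerm d KL σ) KL 0 ∂ν :=
              lintegral_congr_ae (haem.mono fun d hd => (hpoint d hd).symm)
          _ = ∫⁻ d, Ff 𝒜 β d KL 0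
                ∂(Measure.map (fun d : Fin (K+1) → ℕ × (ℕ → 𝒵) => grpPerm d KL σ) ν) :=
              (lintegral_map (meas_Ff 𝒜 (h𝒜 := h𝒜) β KL 0) (meas_grpPerm KL σ)).symm
          _ = ∫⁻ d, Ff 𝒜 β d KL 0 ∂ν := by rw [hmapgrp]
      have hGν : ∫⁻ d, Gf 𝒜 β d KL ∂ν = ∫⁻ d, Ff 𝒜 β d KL 0 ∂ν := by
        calc ∫⁻ d, Gf 𝒜 β d KL ∂ν
            = ∫⁻ d, (m : ℝ≥0∞)⁻¹ * ∑ i ∈ Finset.range m, Ff 𝒜 β d KL i ∂ν := by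
              refine lintegral_congr_ae (haem.mono fun d hd => ?_)
              simp only [Gf]
              rw [hd]
          _ = (m : ℝ≥0∞)⁻¹ * ∑ i ∈ Finset.range m, ∫⁻ d, Ff 𝒜 β d KL i ∂ν := by
              rw [lintegral_const_mul _ (Finset.measurable_sum _
                  fun i _ => meas_Ff 𝒜 (h𝒜 := h𝒜) β KL i),
                lintegral_finset_sum _ fun i _ => meas_Ff 𝒜 (h𝒜 := h𝒜) β KL i]
          _ = (m : ℝ≥0∞)⁻¹ * (m * ∫⁻ d, Ff 𝒜 β d KL 0 ∂ν) := by
              rw [Finset.sum_congr rfl fun i hi => hswap i (Finset.mem_range.1 hi),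
                Finset.sum_const, Finset.card_range, nsmul_eq_mul]
          _ = ∫⁻ d, Ff 𝒜 β d KL 0 ∂ν := by
              rw [← mul_assoc, ENNReal.inv_mul_cancel
                (Nat.cast_ne_zero.2 (by omega)) (ENNReal.natCast_ne_top _), one_mul]
      rw [hrel _ (meas_Ff 𝒜 (h𝒜 := h𝒜) β KL 0), hrel _ (meas_Gf 𝒜 (h𝒜 := h𝒜) β KL), hGν]
  calc ENNReal.ofReal β = ∫⁻ _, ENNReal.ofReal β ∂ρ := by
        rw [lintegral_const, measure_univ, mul_one]
    _ ≤ ∫⁻ d, (((K+1 : ℕ)) : ℝ≥0∞)⁻¹ * ∑ k : Fin (K+1), Gf 𝒜 β d k ∂ρ := by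
        refine lintegral_mono_ae (h_ae.mono fun d hd => ?_)
        rw [avg_eq]
        exact quantile_le_measure β _ (by
          rw [muFull_univ 𝒜 d hd]; exact ENNReal.ofReal_le_one.2 hβ)
    _ = (((K+1 : ℕ)) : ℝ≥0∞)⁻¹ * ∑ k : Fin (K+1), ∫⁻ d, Gf 𝒜 β d k ∂ρ := by
        rw [lintegral_const_mul _ (Finset.measurable_sum _
          (fun k _ => meas_Gf 𝒜 (h𝒜 := h𝒜) β k)),
          lintegral_finset_sum _ (fun k _ => meas_Gf 𝒜 (h𝒜 := h𝒜) β k)]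
    _ = (((K+1 : ℕ)) : ℝ≥0∞)⁻¹ * ((K+1 : ℕ) * ∫⁻ d, Gf 𝒜 β d (Fin.last K) ∂ρ) := by
        rw [Finset.sum_congr rfl fun k _ => stepB k, Finset.sum_const, Finset.card_univ,
          Fintype.card_fin, nsmul_eq_mul]
    _ = ∫⁻ d, Gf 𝒜 β d (Fin.last K) ∂ρ := by
        rw [← mul_assoc, ENNReal.inv_mul_cancel (Nat.cast_ne_zero.2 K.succ_ne_zero)
          (ENNReal.natCast_ne_top _), one_mul]
    _ = ∫⁻ d, Ff 𝒜 β d (Fin.last K) 0 ∂ρ := stepA.symm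
    _ = ρ {d | esc 𝒜 d (Fin.last K) 0 ≤ Qf 𝒜 β d} := h1

end Main

end Core
/-- **Theorem (Marginal coverage for hierarchical full conformal prediction).**
Under hierarchical exchangeability of the `K+1` groups (with test point the first
observation of group `K`), and with a hierarchically symmetric algorithm `𝒜` producing a
score function from the `K` data groups together with a candidate group `z̃`, the full
conformal prediction set `Ĉ(X_test) = {y : (X_test, y) ∈ P₁C̃}` satisfies
`P(Y_test ∈ Ĉ(X_test)) ≥ 1 - α`. -/
theorem hier_full_conformal_coverage
    {𝒳 𝒴 Ω : Type*} [MeasurableSpace 𝒳] [MeasurableSpace 𝒴] [MeasurableSpace Ω]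
    (P : Measure Ω) [IsProbabilityMeasure P]
    (K : ℕ)
    (N : ℕ → Ω → ℕ) (Z : ℕ → ℕ → Ω → 𝒳 × 𝒴)
    (hN : ∀ k ω, 1 ≤ N k ω)
    (hNmeas : ∀ k, Measurable (N k)) (hZmeas : ∀ k i, Measurable (Z k i))
    (hexch : HierExch (K + 1) P N Z)
    (α : ℝ) (hα₀ : 0 < α) (hα₁ : α < 1)
    (𝒜 : (Fin (K + 1) → ℕ × (ℕ → 𝒳 × 𝒴)) → 𝒳 × 𝒴 → ℝ)
    (h𝒜 : Measurable fun p : (Fin (K + 1) → ℕ × (ℕ → 𝒳 × 𝒴)) × (𝒳 × 𝒴) => 𝒜 p.1 p.2)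
    (hsym : HierInvariant (K + 1) 𝒜) :
    ENNReal.ofReal (1 - α) ≤
      P {ω | ∃ z : ℕ × (ℕ → 𝒳 × 𝒴), 1 ≤ z.1 ∧ z.2 0 = Z K 0 ω ∧
        ((𝒜 (fun k : Fin (K + 1) =>
              if k.1 < K then (N k.1 ω, fun i => Z k.1 i ω) else z) (z.2 0) : EReal)
          ≤ hcpThreshold α 0 K (fun k => N k ω)
              fun k i => 𝒜 (fun k' : Fin (K + 1) =>
                if k'.1 < K then (N k'.1 ω, fun i' => Z k'.1 i' ω) else z) (Z k i ω))} := by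
  classical
  have hDmeas : Measurable (hierData (K+1) N Z) := meas_hierData N Z hNmeas hZmeas
  have hβ : (1 - α : ℝ) ≤ 1 := by linarith
  have hmain := main_coverage (𝒜 := 𝒜) (h𝒜 := h𝒜) P N Z hN hNmeas hZmeas hexch hβ hsym
  refine le_trans hmain ?_
  rw [Measure.map_apply hDmeas (measSet_FQ 𝒜 (h𝒜 := h𝒜) (1-α) (Fin.last K) 0)]
  refine measure_mono fun ω hω => ?_
  rw [Set.mem_preimage, Set.mem_setOf_eq] at hω
  refine ⟨(N K ω, fun i => Z K i ω), hN K ω, rfl, ?_⟩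
  have hfun : (fun k : Fin (K + 1) =>
      if k.1 < K then (N k.1 ω, fun i => Z k.1 i ω) else (N K ω, fun i => Z K i ω))
      = hierData (K+1) N Z ω := by
    funext k
    by_cases hk : k.1 < K
    · rw [if_pos hk]; rfl
    · rw [if_neg hk]
      have hk1 : k.1 = K := by have := k.2; omega
      simp [hierData, hk1]
  rw [hfun]
  refine le_trans hω ?_
  rw [hcpThreshold]
  refine erealQuantile_anti fun t => ?_
  set d := hierData (K+1) N Z ω with hd
  have hLHS : ((∑ k ∈ Finset.Ico 0 K, ∑ i ∈ Finset.range (N k ω),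
        (((K - 0 + 1 : ℕ) : ℝ≥0∞) * ((N k ω : ℕ) : ℝ≥0∞))⁻¹ •
          Measure.dirac ((𝒜 d (Z k i ω) : ℝ) : EReal))
      + (((K - 0 + 1 : ℕ) : ℝ≥0∞))⁻¹ • Measure.dirac (⊤ : EReal)) (Set.Iic t)
      = (∑ k ∈ Finset.range K, ∑ i ∈ Finset.range (N k ω),
          wgt K (N k ω) * (Set.Iic t).indicator 1 ((𝒜 d (Z k i ω) : ℝ) : EReal))
        + (((K + 1 : ℕ) : ℝ≥0∞))⁻¹ * (Set.Iic t).indicator 1 (⊤ : EReal) := by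
    rw [Measure.add_apply, Measure.smul_apply, Measure.dirac_apply' _ measurableSet_Iic,
      MeasureTheory.Measure.finset_sum_apply, smul_eq_mul, ← Finset.range_eq_Ico]
    congr 1
    refine Finset.sum_congr rfl fun k _ => ?_
    rw [MeasureTheory.Measure.finset_sum_apply]
    refine Finset.sum_congr rfl fun i _ => ?_
    rw [Measure.smul_apply, Measure.dirac_apply' _ measurableSet_Iic, smul_eq_mul]
    rfl
  rw [hLHS, muFull_apply 𝒜 d measurableSet_Iic, Fin.sum_univ_castSucc]
  refine add_le_add (le_of_eq ?_) ?_
  · rw [← Fin.sum_univ_eq_sum_range (fun j => ∑ i ∈ Finset.range (N j ω),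
      wgt K (N j ω) * (Set.Iic t).indicator 1 ((𝒜 d (Z j i ω) : ℝ) : EReal)) K]
    rfl
  · by_cases ht : (⊤ : EReal) ≤ t
    · have hind : ∀ i, (Set.Iic t).indicator (1 : EReal → ℝ≥0∞)
          (esc 𝒜 d (Fin.last K) i) = 1 := fun i => by
        rw [Set.indicator_of_mem (Set.mem_Iic.2 (le_trans le_top ht)), Pi.one_apply]
      rw [Set.indicator_of_mem (Set.mem_Iic.2 ht)]
      refine le_of_eq ?_
      have hlast1 : ((d (Fin.last K)).1 : ℕ) = N K ω := rfl
      calc (((K + 1 : ℕ) : ℝ≥0∞))⁻¹ * (1 : EReal → ℝ≥0∞) ⊤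
          = (((K + 1 : ℕ) : ℝ≥0∞))⁻¹ := by rw [Pi.one_apply, mul_one]
        _ = (N K ω : ℝ≥0∞) * wgt K (N K ω) := (wgt_mul (hN K ω)).symm
        _ = ∑ i ∈ Finset.range (N K ω), wgt K (N K ω) * 1 := by
            rw [Finset.sum_const, Finset.card_range, nsmul_eq_mul, mul_one]
        _ = ∑ i ∈ Finset.range ((d (Fin.last K)).1),
              wgt K ((d (Fin.last K)).1) *
                (Set.Iic t).indicator 1 (esc 𝒜 d (Fin.last K) i) := by
            rw [hlast1]
            exact Finset.sum_congr rfl fun i _ => by rw [hind i]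
    · rw [Set.indicator_of_notMem (fun hmem => ht (Set.mem_Iic.1 hmem)), mul_zero]
      exact zero_le
end
end

section
/- Pairwise-minimum exchangeability identity for HCP²: Let Z̃_1,…,Z̃_{K+1} be a hierarchically exchangeable sequence in 𝒵̃ in which every group size satisfies N_k ≥ 2 almost surely, let s : 𝒵 → ℝ be a fixed measurable score function, and let q' : 𝒵̃^{K+1} → ℝ be a measurable function that is invariant under any permutation of its K+1 group arguments and under any permutation of the entries within any single group argument. Then P( min{s(Z_{K+1,1}), s(Z_{K+1,2})} ≤ q'(Z̃_1,…,Z̃_{K+1}) ) = E[ (1/(K+1)) Σ_{k=1}^{K+1} (1/C(N_k,2)) Σ_{1 ≤ i < i' ≤ N_k} 1{ min{s(Z_{k,i}), s(Z_{k,i'})} ≤ q'(Z̃_1,…,Z̃_{K+1}) } ], where C(N,2) = N(N−1)/2. -/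
open MeasureTheory ProbabilityTheory
open scoped ENNReal

noncomputable section

section Aux

variable {Ω 𝒵 : Type*} [MeasurableSpace Ω] [MeasurableSpace 𝒵]

lemma measurable_hierData (L : ℕ) (N : ℕ → Ω → ℕ) (Z : ℕ → ℕ → Ω → 𝒵)
    (hN : ∀ k, Measurable (N k)) (hZ : ∀ k i, Measurable (Z k i)) :
    Measurable (hierData L N Z) :=
  measurable_pi_lambda _ fun k =>
    (hN k.1).prodMk (measurable_pi_lambda _ fun i => hZ k.1 i)

/-- The indicator of the event that the pairwise minimum score of entries `i, i'` of
group `k` is at most `q'` of the data. -/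
def gfun {𝒵 : Type*} (L : ℕ) (s : 𝒵 → ℝ) (q' : (Fin L → ℕ × (ℕ → 𝒵)) → ℝ)
    (k : Fin L) (i i' : ℕ) (d : Fin L → ℕ × (ℕ → 𝒵)) : ℝ≥0∞ :=
  if min (s ((d k).2 i)) (s ((d k).2 i')) ≤ q' d then 1 else 0

lemma measurable_gfun (L : ℕ) (s : 𝒵 → ℝ) (q' : (Fin L → ℕ × (ℕ → 𝒵)) → ℝ)
    (hs : Measurable s) (hq : Measurable q') (k : Fin L) (i i' : ℕ) :
    Measurable (gfun L s q' k i i') := by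
  have h1 : Measurable fun d : Fin L → ℕ × (ℕ → 𝒵) =>
      min (s ((d k).2 i)) (s ((d k).2 i')) :=
    Measurable.min
      (hs.comp ((measurable_pi_apply i).comp (measurable_snd.comp (measurable_pi_apply k))))
      (hs.comp ((measurable_pi_apply i').comp (measurable_snd.comp (measurable_pi_apply k))))
  exact Measurable.ite (measurableSet_le h1 hq) measurable_const measurable_const

lemma q'_perm {β : Type*} {L : ℕ} {q' : (Fin L → ℕ × (ℕ → 𝒵)) → β}
    (hqinv : HierInvariant L q') (d : Fin L → ℕ × (ℕ → 𝒵)) (k : Fin L) (m : ℕ)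
    (hm : (d k).1 = m) (σ : Equiv.Perm (Fin m)) :
    q' (Function.update d k (m, fun i => (d k).2 (permExt σ i))) = q' d := by
  subst hm; exact hqinv.2 d k σ

lemma pairPerm (m i i' : ℕ) (hii' : i < i') (hi'm : i' < m) :
    ∃ σ : Equiv.Perm (Fin m), permExt σ 0 = i ∧ permExt σ 1 = i' := by
  have hi'pos : 0 < i' := Nat.lt_of_le_of_lt (Nat.zero_le i) hii'
  have h0 : (0 : ℕ) < m := lt_trans hi'pos hi'm
  have h1 : (1 : ℕ) < m := lt_of_le_of_lt (Nat.succ_le_of_lt hi'pos) hi'm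
  have him : i < m := lt_trans hii' hi'm
  refine ⟨Equiv.swap ⟨0, h0⟩ ⟨i, him⟩ * Equiv.swap ⟨1, h1⟩ ⟨i', hi'm⟩, ?_, ?_⟩
  · show (if h : (0:ℕ) < m then _ else _) = i
    rw [dif_pos h0]
    have e1 : Equiv.swap (⟨1, h1⟩ : Fin m) ⟨i', hi'm⟩ ⟨0, h0⟩ = ⟨0, h0⟩ :=
      Equiv.swap_apply_of_ne_of_ne (Fin.ne_of_val_ne (by simp; try omega))
        (Fin.ne_of_val_ne (by simp; try omega))
    rw [Equiv.Perm.mul_apply, e1, Equiv.swap_apply_left]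
  · show (if h : (1:ℕ) < m then _ else _) = i'
    rw [dif_pos h1]
    rw [Equiv.Perm.mul_apply, Equiv.swap_apply_left]
    have e2 : Equiv.swap (⟨0, h0⟩ : Fin m) ⟨i, him⟩ ⟨i', hi'm⟩ = ⟨i', hi'm⟩ :=
      Equiv.swap_apply_of_ne_of_ne (Fin.ne_of_val_ne (by simp; try omega))
        (Fin.ne_of_val_ne (by simp; try omega))
    rw [e2]

/-- Step 1: group exchangeability. -/
lemma step1 (L : ℕ) (P : Measure Ω) (N : ℕ → Ω → ℕ) (Z : ℕ → ℕ → Ω → 𝒵)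
    (hN : ∀ k, Measurable (N k)) (hZ : ∀ k i, Measurable (Z k i))
    (hexch : HierExch L P N Z)
    (s : 𝒵 → ℝ) (hs : Measurable s)
    (q' : (Fin L → ℕ × (ℕ → 𝒵)) → ℝ) (hq : Measurable q')
    (hqinv : HierInvariant L q') (k j : Fin L) :
    ∫⁻ ω, gfun L s q' k 0 1 (hierData L N Z ω) ∂P
      = ∫⁻ ω, gfun L s q' j 0 1 (hierData L N Z ω) ∂P := by
  have hD := measurable_hierData L N Z hN hZ
  set σ : Equiv.Perm (Fin L) := Equiv.swap j k with hσ
  have hDσ : Measurable fun ω => fun t : Fin L => hierData L N Z ω (σ t) :=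
    measurable_pi_lambda _ fun t => (measurable_pi_apply (σ t)).comp hD
  have hg := measurable_gfun L s q' hs hq
  have h1 : ∫⁻ ω, gfun L s q' j 0 1 (hierData L N Z ω) ∂P
      = ∫⁻ d, gfun L s q' j 0 1 d ∂(Measure.map (hierData L N Z) P) :=
    (lintegral_map (hg j 0 1) hD).symm
  rw [h1, ← hexch.1 σ, lintegral_map (hg j 0 1) hDσ]
  refine lintegral_congr fun ω => ?_
  show gfun L s q' k 0 1 (hierData L N Z ω)
      = gfun L s q' j 0 1 (fun t => hierData L N Z ω (σ t))
  unfold gfun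
  rw [hqinv.1 (hierData L N Z ω) σ]
  simp only [hσ, Equiv.swap_apply_left]

/-- Step 2: within-group exchangeability. -/
lemma step2 (L : ℕ) (P : Measure Ω) [IsProbabilityMeasure P]
    (N : ℕ → Ω → ℕ) (Z : ℕ → ℕ → Ω → 𝒵)
    (hN : ∀ k, Measurable (N k)) (hZ : ∀ k i, Measurable (Z k i))
    (hexch : HierExch L P N Z)
    (s : 𝒵 → ℝ) (hs : Measurable s)
    (q' : (Fin L → ℕ × (ℕ → 𝒵)) → ℝ) (hq : Measurable q')
    (hqinv : HierInvariant L q') (k : Fin L) (m i i' : ℕ)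
    (hii' : i < i') (hi'm : i' < m) :
    ∫⁻ ω in {ω | N k.1 ω = m}, gfun L s q' k i i' (hierData L N Z ω) ∂P
      = ∫⁻ ω in {ω | N k.1 ω = m}, gfun L s q' k 0 1 (hierData L N Z ω) ∂P := by
  set A := {ω | N k.1 ω = m} with hA
  have hAmeas : MeasurableSet A := (hN k.1) (measurableSet_singleton m)
  by_cases hPA : P A = 0
  · rw [setLIntegral_measure_zero _ _ hPA, setLIntegral_measure_zero _ _ hPA]
  obtain ⟨σ, hσ0, hσ1⟩ := pairPerm m i i' hii' hi'm
  have hPApos : 0 < P A := pos_iff_ne_zero.mpr hPA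
  have hmap := hexch.2 k.1 k.isLt m hPApos σ
  set Z' : ℕ → ℕ → Ω → 𝒵 := fun k' j => if k' = k.1 then Z k' (permExt σ j) else Z k' j
    with hZ'
  have hZ'meas : ∀ k' j, Measurable (Z' k' j) := by
    intro k' j
    by_cases h : k' = k.1 <;> simp only [hZ', h, if_true, if_false] <;> apply hZ
  have hD := measurable_hierData L N Z hN hZ
  have hD' := measurable_hierData L N Z' hN hZ'meas
  have hg := measurable_gfun L s q' hs hq
  have hpt : ∀ ω ∈ A, gfun L s q' k 0 1 (hierData L N Z' ω)
      = gfun L s q' k i i' (hierData L N Z ω) := by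
    intro ω hω
    have hNω : N k.1 ω = m := hω
    have hupd : hierData L N Z' ω
        = Function.update (hierData L N Z ω) k
            (m, fun j => (hierData L N Z ω k).2 (permExt σ j)) := by
      funext t
      by_cases ht : t = k
      · subst ht
        rw [Function.update_self]
        show (N t.1 ω, fun j => Z' t.1 j ω) = (m, fun j => Z t.1 (permExt σ j) ω)
        simp only [hZ', if_pos rfl, hNω]
      · rw [Function.update_of_ne ht]
        show (N t.1 ω, fun j => Z' t.1 j ω) = (N t.1 ω, fun j => Z t.1 j ω)
        have htk : t.1 ≠ k.1 := fun h => ht (Fin.ext h)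
        simp only [hZ', htk, if_false]
    have hq'eq : q' (hierData L N Z' ω) = q' (hierData L N Z ω) := by
      rw [hupd]; exact q'_perm hqinv _ k m hNω σ
    have h0 : (hierData L N Z' ω k).2 0 = (hierData L N Z ω k).2 i := by
      show Z' k.1 0 ω = Z k.1 i ω
      simp only [hZ', if_pos rfl, hσ0]
    have h1 : (hierData L N Z' ω k).2 1 = (hierData L N Z ω k).2 i' := by
      show Z' k.1 1 ω = Z k.1 i' ω
      simp only [hZ', if_pos rfl, hσ1]
    unfold gfun
    rw [hq'eq, h0, h1]
  have hcond : ∫⁻ ω, gfun L s q' k i i' (hierData L N Z ω) ∂(P[|A])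
      = ∫⁻ ω, gfun L s q' k 0 1 (hierData L N Z ω) ∂(P[|A]) := by
    have h1 : ∫⁻ ω, gfun L s q' k 0 1 (hierData L N Z ω) ∂(P[|A])
        = ∫⁻ d, gfun L s q' k 0 1 d ∂(Measure.map (hierData L N Z) (P[|A])) :=
      (lintegral_map (hg k 0 1) hD).symm
    rw [h1, ← hmap, lintegral_map (hg k 0 1) hD']
    refine lintegral_congr_ae ?_
    have hae : ∀ᵐ ω ∂(P[|A]), ω ∈ A := by
      unfold ProbabilityTheory.cond
      exact Measure.ae_smul_measure (ae_restrict_mem hAmeas) _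
    filter_upwards [hae] with ω hω
    exact (hpt ω hω).symm
  have hrw : ∀ f : Ω → ℝ≥0∞, ∫⁻ ω, f ω ∂(P[|A]) = (P A)⁻¹ * ∫⁻ ω in A, f ω ∂P := by
    intro f
    unfold ProbabilityTheory.cond
    exact lintegral_smul_measure _ _
  rw [hrw, hrw] at hcond
  have hPAne : P A ≠ ⊤ := measure_ne_top P A
  have := congrArg (fun x => P A * x) hcond
  simpa [← mul_assoc, ENNReal.mul_inv_cancel hPA hPAne, one_mul] using this


lemma sum_Ico_card (m : ℕ) : ∑ i ∈ Finset.range m, (m - (i+1)) = m.choose 2 := by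
  calc ∑ i ∈ Finset.range m, (m - (i+1))
      = ∑ i ∈ Finset.range m, (m - 1 - i) :=
        Finset.sum_congr rfl fun i _ => by omega
    _ = ∑ i ∈ Finset.range m, i := Finset.sum_range_reflect (fun i => i) m
    _ = m.choose 2 := by rw [Finset.sum_range_id, Nat.choose_two_right]

/-- The group-`k` summand of the HCP² average. -/
def Ffun (L : ℕ) (N : ℕ → Ω → ℕ) (Z : ℕ → ℕ → Ω → 𝒵) (s : 𝒵 → ℝ)
    (q' : (Fin L → ℕ × (ℕ → 𝒵)) → ℝ) (k : Fin L) (ω : Ω) : ℝ≥0∞ :=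
  (((N k.1 ω).choose 2 : ℝ≥0∞))⁻¹ *
    ∑ i ∈ Finset.range (N k.1 ω), ∑ i' ∈ Finset.Ico (i + 1) (N k.1 ω),
      gfun L s q' k i i' (hierData L N Z ω)

lemma measurable_Ffun (L : ℕ) (N : ℕ → Ω → ℕ) (Z : ℕ → ℕ → Ω → 𝒵)
    (hN : ∀ k, Measurable (N k)) (hZ : ∀ k i, Measurable (Z k i))
    (s : 𝒵 → ℝ) (hs : Measurable s)
    (q' : (Fin L → ℕ × (ℕ → 𝒵)) → ℝ) (hq : Measurable q') (k : Fin L) :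
    Measurable (Ffun L N Z s q' k) := by
  have hg := measurable_gfun L s q' hs hq
  have hφ : Measurable fun p : (Fin L → ℕ × (ℕ → 𝒵)) × ℕ =>
      ((p.2.choose 2 : ℝ≥0∞))⁻¹ *
        ∑ i ∈ Finset.range p.2, ∑ i' ∈ Finset.Ico (i + 1) p.2, gfun L s q' k i i' p.1 := by
    apply measurable_from_prod_countable_left
    intro n
    show Measurable fun d : Fin L → ℕ × (ℕ → 𝒵) => ((n.choose 2 : ℝ≥0∞))⁻¹ *
        ∑ i ∈ Finset.range n, ∑ i' ∈ Finset.Ico (i + 1) n, gfun L s q' k i i' d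
    exact Measurable.const_mul
      (Finset.measurable_sum _ fun i _ => Finset.measurable_sum _ fun i' _ => hg k i i') _
  have := hφ.comp ((measurable_hierData L N Z hN hZ).prodMk (hN k.1))
  unfold Ffun
  exact this

/-- Step 3: the normalized within-group pair average has the same integral as the
indicator for the pair `(0,1)`. -/
lemma step3 (L : ℕ) (P : Measure Ω) [IsProbabilityMeasure P]
    (N : ℕ → Ω → ℕ) (Z : ℕ → ℕ → Ω → 𝒵)
    (hN : ∀ k, Measurable (N k)) (hZ : ∀ k i, Measurable (Z k i))
    (hexch : HierExch L P N Z)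
    (s : 𝒵 → ℝ) (hs : Measurable s)
    (q' : (Fin L → ℕ × (ℕ → 𝒵)) → ℝ) (hq : Measurable q')
    (hqinv : HierInvariant L q') (k : Fin L)
    (hN2k : ∀ᵐ ω ∂P, 2 ≤ N k.1 ω) :
    ∫⁻ ω, Ffun L N Z s q' k ω ∂P
      = ∫⁻ ω, gfun L s q' k 0 1 (hierData L N Z ω) ∂P := by
  have hD := measurable_hierData L N Z hN hZ
  have hg := measurable_gfun L s q' hs hq
  set A : ℕ → Set Ω := fun m => {ω | N k.1 ω = m} with hAdef
  have hA : ∀ m, MeasurableSet (A m) := fun m => (hN k.1) (measurableSet_singleton m)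
  have hdisj : Pairwise (Function.onFun Disjoint A) := by
    intro m n hmn
    rw [Function.onFun, Set.disjoint_left]
    intro ω h1 h2
    exact hmn ((h1 : N k.1 ω = m).symm.trans (h2 : N k.1 ω = n))
  have hunion : ⋃ m, A m = Set.univ := by
    ext ω; simp [hAdef]
  have split : ∀ f : Ω → ℝ≥0∞, ∫⁻ ω, f ω ∂P = ∑' m, ∫⁻ ω in A m, f ω ∂P := by
    intro f
    rw [← setLIntegral_univ, ← hunion, lintegral_iUnion hA hdisj]
  rw [split (Ffun L N Z s q' k), split fun ω => gfun L s q' k 0 1 (hierData L N Z ω)]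
  refine tsum_congr fun m => ?_
  by_cases hPA : P (A m) = 0
  · rw [setLIntegral_measure_zero _ _ hPA, setLIntegral_measure_zero _ _ hPA]
  have hm2 : 2 ≤ m := by
    by_contra hm2
    apply hPA
    refine measure_mono_null (fun ω (hω : N k.1 ω = m) => ?_) (ae_iff.mp hN2k)
    show ¬ 2 ≤ N k.1 ω
    omega
  have hc2ne : ((m.choose 2 : ℝ≥0∞)) ≠ 0 :=
    Nat.cast_ne_zero.mpr (Nat.choose_pos hm2).ne'
  have hgmeas : ∀ i i', Measurable fun ω => gfun L s q' k i i' (hierData L N Z ω) :=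
    fun i i' => (hg k i i').comp hD
  calc ∫⁻ ω in A m, Ffun L N Z s q' k ω ∂P
      = ∫⁻ ω in A m, ((m.choose 2 : ℝ≥0∞))⁻¹ *
          ∑ i ∈ Finset.range m, ∑ i' ∈ Finset.Ico (i+1) m,
            gfun L s q' k i i' (hierData L N Z ω) ∂P := by
        refine setLIntegral_congr_fun (hA m) (fun ω hω => ?_)
        have hNω : N k.1 ω = m := hω
        unfold Ffun
        rw [hNω]
    _ = ((m.choose 2 : ℝ≥0∞))⁻¹ * ∑ i ∈ Finset.range m, ∑ i' ∈ Finset.Ico (i+1) m,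
          ∫⁻ ω in A m, gfun L s q' k i i' (hierData L N Z ω) ∂P := by
        rw [lintegral_const_mul' _ _ (ENNReal.inv_ne_top.mpr hc2ne)]
        congr 1
        rw [lintegral_finset_sum _
          (fun i _ => Finset.measurable_sum _ fun i' _ => hgmeas i i')]
        refine Finset.sum_congr rfl fun i _ => ?_
        rw [lintegral_finset_sum _ (fun i' _ => hgmeas i i')]
    _ = ((m.choose 2 : ℝ≥0∞))⁻¹ * ∑ i ∈ Finset.range m, ∑ i' ∈ Finset.Ico (i+1) m,
          ∫⁻ ω in A m, gfun L s q' k 0 1 (hierData L N Z ω) ∂P := by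
        congr 1
        refine Finset.sum_congr rfl fun i _ => Finset.sum_congr rfl fun i' hi' => ?_
        obtain ⟨h1, h2⟩ := Finset.mem_Ico.mp hi'
        exact step2 L P N Z hN hZ hexch s hs q' hq hqinv k m i i' h1 h2
    _ = ∫⁻ ω in A m, gfun L s q' k 0 1 (hierData L N Z ω) ∂P := by
        set c := ∫⁻ ω in A m, gfun L s q' k 0 1 (hierData L N Z ω) ∂P with hc
        have hsum : ∑ i ∈ Finset.range m, ∑ i' ∈ Finset.Ico (i+1) m, c
            = (m.choose 2 : ℝ≥0∞) * c := by
          simp only [Finset.sum_const, Nat.card_Ico]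
          rw [← Finset.sum_smul, sum_Ico_card, nsmul_eq_mul]
        rw [hsum, ← mul_assoc, ENNReal.inv_mul_cancel hc2ne (ENNReal.natCast_ne_top _),
          one_mul]

end Aux

/-- **Lemma (Pairwise-minimum exchangeability identity for HCP²).**
For a hierarchically exchangeable sequence of groups all of size at least two a.s., a
fixed measurable score `s` and a measurable, hierarchically invariant function `q'` of
the full data set,
`P(min(s(Z_{K+1,1}), s(Z_{K+1,2})) ≤ q') =
   E[(1/(K+1)) Σ_k (1/C(N_k,2)) Σ_{i<i'} 1{min(s(Z_{k,i}), s(Z_{k,i'})) ≤ q'}]`. -/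
theorem hcp2_exchangeability_identity
    {𝒵 Ω : Type*} [MeasurableSpace 𝒵] [MeasurableSpace Ω]
    (P : Measure Ω) [IsProbabilityMeasure P]
    (K : ℕ)
    (N : ℕ → Ω → ℕ) (Z : ℕ → ℕ → Ω → 𝒵)
    (hN2 : ∀ k, k < K + 1 → ∀ᵐ ω ∂P, 2 ≤ N k ω)
    (hNmeas : ∀ k, Measurable (N k)) (hZmeas : ∀ k i, Measurable (Z k i))
    (hexch : HierExch (K + 1) P N Z)
    (s : 𝒵 → ℝ) (hs : Measurable s)
    (q' : (Fin (K + 1) → ℕ × (ℕ → 𝒵)) → ℝ) (hq : Measurable q')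
    (hqinv : HierInvariant (K + 1) q') :
    P {ω | min (s (Z K 0 ω)) (s (Z K 1 ω)) ≤ q' (hierData (K + 1) N Z ω)} =
      ∫⁻ ω, (((K + 1 : ℕ) : ℝ≥0∞))⁻¹ *
        ∑ k ∈ Finset.range (K + 1), (((N k ω).choose 2 : ℝ≥0∞))⁻¹ *
          ∑ i ∈ Finset.range (N k ω), ∑ i' ∈ Finset.Ico (i + 1) (N k ω),
            (if min (s (Z k i ω)) (s (Z k i' ω)) ≤ q' (hierData (K + 1) N Z ω)
              then (1 : ℝ≥0∞) else 0) ∂P := by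
  classical
  have hD := measurable_hierData (K + 1) N Z hNmeas hZmeas
  set kK : Fin (K + 1) := ⟨K, Nat.lt_succ_self K⟩ with hkK
  -- measurability of the event
  have hsetmeas : MeasurableSet {d : Fin (K + 1) → ℕ × (ℕ → 𝒵) |
      min (s ((d kK).2 0)) (s ((d kK).2 1)) ≤ q' d} :=
    measurableSet_le (Measurable.min
      (hs.comp ((measurable_pi_apply 0).comp (measurable_snd.comp (measurable_pi_apply kK))))
      (hs.comp ((measurable_pi_apply 1).comp (measurable_snd.comp (measurable_pi_apply kK)))))
      hq
  have hmeasΩ : MeasurableSet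
      {ω | min (s (Z K 0 ω)) (s (Z K 1 ω)) ≤ q' (hierData (K + 1) N Z ω)} := hD hsetmeas
  -- LHS as an integral
  have hLHS : P {ω | min (s (Z K 0 ω)) (s (Z K 1 ω)) ≤ q' (hierData (K + 1) N Z ω)}
      = ∫⁻ ω, gfun (K + 1) s q' kK 0 1 (hierData (K + 1) N Z ω) ∂P := by
    rw [← lintegral_indicator_one hmeasΩ]
    refine lintegral_congr fun ω => ?_
    by_cases hmem : min (s (Z K 0 ω)) (s (Z K 1 ω)) ≤ q' (hierData (K + 1) N Z ω)
    · exact (Set.indicator_of_mem hmem 1).trans (if_pos hmem).symm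
    · exact (Set.indicator_of_notMem hmem 1).trans (if_neg hmem).symm
  -- RHS as an integral of `Ffun`s
  have hRHS1 : ∫⁻ ω, (((K + 1 : ℕ) : ℝ≥0∞))⁻¹ *
        ∑ k ∈ Finset.range (K + 1), (((N k ω).choose 2 : ℝ≥0∞))⁻¹ *
          ∑ i ∈ Finset.range (N k ω), ∑ i' ∈ Finset.Ico (i + 1) (N k ω),
            (if min (s (Z k i ω)) (s (Z k i' ω)) ≤ q' (hierData (K + 1) N Z ω)
              then (1 : ℝ≥0∞) else 0) ∂P
      = ∫⁻ ω, (((K + 1 : ℕ) : ℝ≥0∞))⁻¹ *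
          ∑ k : Fin (K + 1), Ffun (K + 1) N Z s q' k ω ∂P := by
    refine lintegral_congr fun ω => ?_
    congr 1
    rw [Finset.sum_range fun k => (((N k ω).choose 2 : ℝ≥0∞))⁻¹ *
          ∑ i ∈ Finset.range (N k ω), ∑ i' ∈ Finset.Ico (i + 1) (N k ω),
            (if min (s (Z k i ω)) (s (Z k i' ω)) ≤ q' (hierData (K + 1) N Z ω)
              then (1 : ℝ≥0∞) else 0)]
    exact Finset.sum_congr rfl fun k _ => rfl
  have hKne : (((K + 1 : ℕ) : ℝ≥0∞)) ≠ 0 := Nat.cast_ne_zero.mpr (Nat.succ_ne_zero K)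
  have hterm : ∀ k : Fin (K + 1),
      ∫⁻ ω, Ffun (K + 1) N Z s q' k ω ∂P
        = ∫⁻ ω, gfun (K + 1) s q' kK 0 1 (hierData (K + 1) N Z ω) ∂P := fun k =>
    (step3 (K + 1) P N Z hNmeas hZmeas hexch s hs q' hq hqinv k (hN2 k.1 k.isLt)).trans
      (step1 (K + 1) P N Z hNmeas hZmeas hexch s hs q' hq hqinv k kK)
  rw [hLHS, hRHS1, lintegral_const_mul' _ _ (ENNReal.inv_ne_top.mpr hKne),
    lintegral_finset_sum _ (fun k _ => measurable_Ffun (K + 1) N Z hNmeas hZmeas s hs q' hq k)]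
  rw [Finset.sum_congr rfl fun k _ => hterm k, Finset.sum_const, Finset.card_univ,
    Fintype.card_fin, nsmul_eq_mul, ← mul_assoc,
    ENNReal.inv_mul_cancel hKne (ENNReal.natCast_ne_top _), one_mul]
end
end
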